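/- arXiv:1407.6029 — 3 statements merged into one kernel-verified Lean document; each statement's English description precedes it below -/
import Mathlib

section
/- For a two-dimensional lattice with basis b_1, b_2 ∈ ℝ², the Lagrange–Gauss reduction procedure — repeatedly swapping (b_1, b_2) ← (b_2, -b_1) and replacing b_2 by b_2 - ⌊(b_1·b_2)/‖b_1‖²⌉ b_1 while |(b_1·b_2)/‖b_1‖²| > 1/2 — terminates, and upon termination b_1 is a shortest nonzero vector of the lattice. -/
open RealInnerProductSpace

/-- One loop iteration of the Lagrange–Gauss reduction:
`(b₁, b₂) ← (b₂, -b₁)` followed by `b₂ ← b₂ - ⌊(b₁·b₂)/‖b₁‖²⌉ b₁`. -/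
noncomputable def gaussStep (p : EuclideanSpace ℝ (Fin 2) × EuclideanSpace ℝ (Fin 2)) :
    EuclideanSpace ℝ (Fin 2) × EuclideanSpace ℝ (Fin 2) :=
  let c₁ := p.2
  let c₂ := -p.1
  (c₁, c₂ - (round (⟪c₁, c₂⟫ / ‖c₁‖ ^ 2) : ℤ) • c₁)

section Aux

local notation "E" => EuclideanSpace ℝ (Fin 2)

lemma gaussStep_eq (x y : E) :
    gaussStep (x, y) = (y, -x - (round (⟪y, -x⟫ / ‖y‖ ^ 2) : ℤ) • y) := by
  simp [gaussStep, sub_eq_add_neg]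

lemma gaussStep_eq' (p : E × E) :
    gaussStep p = (p.2, -p.1 - (round (⟪p.2, -p.1⟫ / ‖p.2‖ ^ 2) : ℤ) • p.2) := by
  simp [gaussStep, sub_eq_add_neg]

lemma zsmul_real (r : ℤ) (v : E) : r • v = (r : ℝ) • v :=
  (Int.cast_smul_eq_zsmul ℝ r v).symm

lemma span_pair_step (x y : E) (r : ℤ) :
    Submodule.span ℤ ({y, -x - r • y} : Set E) = Submodule.span ℤ ({x, y} : Set E) := by
  apply le_antisymm
  · rw [Submodule.span_le]
    rintro v (rfl | rfl)
    · exact Submodule.subset_span (by simp)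
    · refine Submodule.mem_span_pair.mpr ⟨-1, -r, ?_⟩
      simp only [neg_smul, one_smul]; abel
  · rw [Submodule.span_le]
    rintro v (rfl | rfl)
    · refine Submodule.mem_span_pair.mpr ⟨-r, -1, ?_⟩
      simp only [neg_smul, one_smul]; abel
    · exact Submodule.subset_span (by simp)

lemma indep_step {x y : E} (h : LinearIndependent ℝ ![x, y]) (r : ℤ) :
    LinearIndependent ℝ ![y, -x - r • y] := by
  rw [LinearIndependent.pair_iff] at h ⊢
  intro s t hst
  rw [zsmul_real] at hst
  have key : (-t) • x + (s - t * (r : ℝ)) • y = 0 := by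
    rw [← hst]; module
  obtain ⟨h1, h2⟩ := h _ _ key
  have ht : t = 0 := by linarith [neg_eq_zero.mp h1]
  constructor
  · rw [ht] at h2; simpa using h2
  · exact ht

lemma int_quad_ge_one {p q : ℤ} (hpq : ¬(p = 0 ∧ q = 0)) :
    1 ≤ p ^ 2 - |p| * |q| + q ^ 2 := by
  rcases eq_or_ne p 0 with hp | hp
  · have hq : q ≠ 0 := fun h => hpq ⟨hp, h⟩
    have h2 : 1 ≤ |q| := Int.one_le_abs hq
    subst hp
    have hg : (0:ℤ) ^ 2 - |(0:ℤ)| * |q| + q ^ 2 = q ^ 2 := by simp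
    rw [hg]
    nlinarith [sq_abs q, sq_nonneg (|q| - 1)]
  · have h1 : 1 ≤ |p| := Int.one_le_abs hp
    rcases eq_or_ne q 0 with hq | hq
    · subst hq
      have hg : p ^ 2 - |p| * |(0:ℤ)| + (0:ℤ) ^ 2 = p ^ 2 := by simp
      rw [hg]
      nlinarith [sq_abs p, sq_nonneg (|p| - 1)]
    · have h2 : 1 ≤ |q| := Int.one_le_abs hq
      nlinarith [sq_abs p, sq_abs q, sq_nonneg (|p| - |q|), mul_le_mul h1 h2 (by norm_num) (abs_nonneg p)]

lemma shortest_lemma {x y : E} (hx : x ≠ 0)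
    (hhalf : |⟪x, y⟫| ≤ ‖x‖ ^ 2 / 2) (hxy : ‖x‖ ≤ ‖y‖) (p q : ℤ)
    (hpq : ¬(p = 0 ∧ q = 0)) : ‖x‖ ≤ ‖p • x + q • y‖ := by
  have hx2 : (0:ℝ) < ‖x‖ ^ 2 := pow_pos (norm_pos_iff.mpr hx) 2
  have hy2 : ‖x‖ ^ 2 ≤ ‖y‖ ^ 2 := pow_le_pow_left₀ (norm_nonneg _) hxy 2
  have hquad : (1 : ℝ) ≤ (p:ℝ)^2 - |(p:ℝ)| * |(q:ℝ)| + (q:ℝ)^2 := by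
    have := int_quad_ge_one hpq
    exact_mod_cast this
  have hnorm : ‖p • x + q • y‖ ^ 2 =
      (p:ℝ)^2 * ‖x‖^2 + 2 * ((p:ℝ) * (q:ℝ) * ⟪x, y⟫) + (q:ℝ)^2 * ‖y‖^2 := by
    rw [zsmul_real, zsmul_real, norm_add_sq_real, norm_smul, norm_smul,
      real_inner_smul_left, real_inner_smul_right]
    simp only [Real.norm_eq_abs, mul_pow, sq_abs]
    ring
  have habs : -(|(p:ℝ)| * |(q:ℝ)| * (‖x‖^2/2)) ≤ (p:ℝ) * (q:ℝ) * ⟪x, y⟫ := by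
    have h0 : |(p:ℝ) * (q:ℝ) * ⟪x, y⟫| = |(p:ℝ)| * |(q:ℝ)| * |⟪x, y⟫| := by
      rw [abs_mul, abs_mul]
    have h1 : |(p:ℝ)| * |(q:ℝ)| * |⟪x, y⟫| ≤ |(p:ℝ)| * |(q:ℝ)| * (‖x‖^2/2) :=
      mul_le_mul_of_nonneg_left hhalf (by positivity)
    nlinarith [neg_abs_le ((p:ℝ) * (q:ℝ) * ⟪x, y⟫)]
  have hA := mul_le_mul_of_nonneg_right hquad hx2.le
  have hB := mul_le_mul_of_nonneg_left hy2 (sq_nonneg (q:ℝ))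
  have hsq : ‖x‖ ^ 2 ≤ ‖p • x + q • y‖ ^ 2 := by
    rw [hnorm]; nlinarith
  exact (pow_le_pow_iff_left₀ (norm_nonneg _) (norm_nonneg _) two_ne_zero).mp hsq

end Aux

/-- The Lagrange–Gauss procedure terminates: some iterate `(a₁, a₂)` satisfies the
stopping condition `|(a₁·a₂)/‖a₁‖²| ≤ 1/2`, and then `a₁` is a shortest nonzero
vector of the lattice generated by `b₁, b₂`. -/
theorem gauss_reduction_terminates (b₁ b₂ : EuclideanSpace ℝ (Fin 2))
    (hind : LinearIndependent ℝ ![b₁, b₂]) :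
    ∃ n : ℕ,
      |⟪(gaussStep^[n] (b₁, b₂)).1, (gaussStep^[n] (b₁, b₂)).2⟫| ≤
        ‖(gaussStep^[n] (b₁, b₂)).1‖ ^ 2 / 2 ∧
      ∀ p q : ℤ, ¬(p = 0 ∧ q = 0) →
        ‖(gaussStep^[n] (b₁, b₂)).1‖ ≤ ‖p • b₁ + q • b₂‖ := by
  classical
  have inv : ∀ n : ℕ,
      Submodule.span ℤ ({(gaussStep^[n] (b₁, b₂)).1, (gaussStep^[n] (b₁, b₂)).2} :
        Set (EuclideanSpace ℝ (Fin 2))) =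
        Submodule.span ℤ ({b₁, b₂} : Set (EuclideanSpace ℝ (Fin 2))) ∧
      LinearIndependent ℝ ![(gaussStep^[n] (b₁, b₂)).1, (gaussStep^[n] (b₁, b₂)).2] := by
    intro n
    induction n with
    | zero => exact ⟨rfl, hind⟩
    | succ n ih =>
      rw [Function.iterate_succ_apply', gaussStep_eq']
      exact ⟨(span_pair_step _ _ _).trans ih.1, indep_step ih.2 _⟩
  have half : ∀ n : ℕ,
      |⟪(gaussStep^[n+1] (b₁, b₂)).1, (gaussStep^[n+1] (b₁, b₂)).2⟫| ≤
        ‖(gaussStep^[n+1] (b₁, b₂)).1‖ ^ 2 / 2 := by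
    intro n
    obtain ⟨-, hLI⟩ := inv n
    set x := (gaussStep^[n] (b₁, b₂)).1 with hx
    set y := (gaussStep^[n] (b₁, b₂)).2 with hy
    have hy0 : y ≠ 0 := by simpa using hLI.ne_zero 1
    have hy2 : (0:ℝ) < ‖y‖ ^ 2 := pow_pos (norm_pos_iff.mpr hy0) 2
    rw [Function.iterate_succ_apply', gaussStep_eq']
    show |⟪y, -x - (round (⟪y, -x⟫ / ‖y‖ ^ 2) : ℤ) • y⟫| ≤ ‖y‖ ^ 2 / 2
    set μ : ℝ := ⟪y, -x⟫ / ‖y‖ ^ 2 with hμ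
    have hinner : ⟪y, -x - (round μ : ℤ) • y⟫ = (μ - round μ) * ‖y‖ ^ 2 := by
      rw [zsmul_real, inner_sub_right, real_inner_smul_right, real_inner_self_eq_norm_sq]
      rw [hμ]
      field_simp
    calc |⟪y, -x - (round μ : ℤ) • y⟫| = |μ - round μ| * ‖y‖ ^ 2 := by
          rw [hinner, abs_mul, abs_of_nonneg hy2.le]
      _ ≤ 1/2 * ‖y‖ ^ 2 := by
          gcongr
          exact abs_sub_round μ
      _ = ‖y‖ ^ 2 / 2 := by ring
  have hbz : ∀ p q : ℤ, ¬(p = 0 ∧ q = 0) → p • b₁ + q • b₂ ≠ 0 := by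
    intro p q hpq h0
    rw [zsmul_real, zsmul_real] at h0
    obtain ⟨h1, h2⟩ := LinearIndependent.pair_iff.mp hind _ _ h0
    exact hpq ⟨by exact_mod_cast h1, by exact_mod_cast h2⟩
  have shortest_at : ∀ n : ℕ,
      |⟪(gaussStep^[n] (b₁, b₂)).1, (gaussStep^[n] (b₁, b₂)).2⟫| ≤
        ‖(gaussStep^[n] (b₁, b₂)).1‖ ^ 2 / 2 →
      ‖(gaussStep^[n] (b₁, b₂)).1‖ ≤ ‖(gaussStep^[n] (b₁, b₂)).2‖ →
      ∀ p q : ℤ, ¬(p = 0 ∧ q = 0) →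
        ‖(gaussStep^[n] (b₁, b₂)).1‖ ≤ ‖p • b₁ + q • b₂‖ := by
    intro n hh hle p q hpq
    set x := (gaussStep^[n] (b₁, b₂)).1 with hx
    set y := (gaussStep^[n] (b₁, b₂)).2 with hy
    have hx0 : x ≠ 0 := by simpa using (inv n).2.ne_zero 0
    have hv : p • b₁ + q • b₂ ∈
        Submodule.span ℤ ({x, y} : Set (EuclideanSpace ℝ (Fin 2))) := by
      rw [(inv n).1]
      exact Submodule.add_mem _
        (Submodule.smul_mem _ p (Submodule.subset_span (by simp)))
        (Submodule.smul_mem _ q (Submodule.subset_span (by simp)))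
    obtain ⟨m, k, hmk⟩ := Submodule.mem_span_pair.mp hv
    have hmk0 : ¬(m = 0 ∧ k = 0) := by
      rintro ⟨rfl, rfl⟩
      simp only [zero_smul, add_zero] at hmk
      exact hbz p q hpq hmk.symm
    calc ‖x‖ ≤ ‖m • x + k • y‖ := shortest_lemma hx0 hh hle m k hmk0
      _ = ‖p • b₁ + q • b₂‖ := by rw [hmk]
  by_cases hex : ∃ n : ℕ, ‖(gaussStep^[n+1] (b₁, b₂)).1‖ ≤ ‖(gaussStep^[n+1] (b₁, b₂)).2‖
  · obtain ⟨n, hn⟩ := hex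
    exact ⟨n + 1, half n, shortest_at (n + 1) (half n) hn⟩
  · exfalso
    push_neg at hex
    set g : ℕ → EuclideanSpace ℝ (Fin 2) := fun n => (gaussStep^[n+1] (b₁, b₂)).1 with hg
    have hsucc : ∀ n : ℕ, g (n + 1) = (gaussStep^[n+1] (b₁, b₂)).2 := by
      intro n
      show (gaussStep^[n+1+1] (b₁, b₂)).1 = (gaussStep^[n+1] (b₁, b₂)).2
      rw [Function.iterate_succ_apply' gaussStep (n+1), gaussStep_eq']
    have hdec : ∀ n : ℕ, ‖g (n + 1)‖ < ‖g n‖ := by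
      intro n
      rw [hsucc n]
      exact hex n
    have hanti : StrictAnti (fun n => ‖g n‖) := strictAnti_nat_of_succ_lt hdec
    have hinj : Function.Injective g := fun a b hab => hanti.injective (congrArg norm hab)
    have hcard : Fintype.card (Fin 2) = Module.finrank ℝ (EuclideanSpace ℝ (Fin 2)) := by simp
    set Bb := basisOfLinearIndependentOfCardEqFinrank hind hcard with hBbdef
    have hBb : Set.range ⇑Bb = {b₁, b₂} := by
      rw [hBbdef, coe_basisOfLinearIndependentOfCardEqFinrank]
      ext v
      simp [Matrix.range_cons, Matrix.range_empty, or_comm]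
    have hmem : ∀ n : ℕ, g n ∈ Metric.closedBall (0 : EuclideanSpace ℝ (Fin 2)) ‖g 0‖ ∩
        (Submodule.span ℤ (Set.range ⇑Bb) : Set (EuclideanSpace ℝ (Fin 2))) := by
      intro n
      constructor
      · rw [Metric.mem_closedBall, dist_zero_right]
        exact hanti.antitone (Nat.zero_le n)
      · rw [SetLike.mem_coe, hBb, ← (inv (n+1)).1]
        exact Submodule.subset_span (by simp [hg])
    have hfin : (Metric.closedBall (0 : EuclideanSpace ℝ (Fin 2)) ‖g 0‖ ∩
        (Submodule.span ℤ (Set.range ⇑Bb) : Set (EuclideanSpace ℝ (Fin 2)))).Finite := by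
      change ((_ : Set (EuclideanSpace ℝ (Fin 2))) ∩
        (Submodule.span ℤ (Set.range ⇑Bb)).toAddSubgroup).Finite
      have hd : DiscreteTopology (Submodule.span ℤ (Set.range ⇑Bb)).toAddSubgroup :=
        inferInstance
      exact Metric.finite_isBounded_inter_isClosed DiscreteTopology.isDiscrete Metric.isBounded_closedBall inferInstance
    exact (Set.infinite_of_injective_forall_mem hinj hmem) hfin
end

section
/- Let b_1, b_2 ∈ ℝ² be a basis of a lattice L satisfying the Lagrange–Gauss reduced conditions ‖b_1‖ ≤ ‖b_2‖ and |b_1·b_2| ≤ ‖b_1‖²/2. Then b_1 is a shortest nonzero vector of L. -/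
open RealInnerProductSpace

/-- A Lagrange–Gauss reduced basis (`‖b₁‖ ≤ ‖b₂‖` and `|b₁·b₂| ≤ ‖b₁‖²/2`) of a
planar lattice has `b₁` a shortest nonzero lattice vector. -/
theorem reduced_basis_shortest (b₁ b₂ : EuclideanSpace ℝ (Fin 2))
    (hind : LinearIndependent ℝ ![b₁, b₂])
    (hle : ‖b₁‖ ≤ ‖b₂‖) (hred : |⟪b₁, b₂⟫| ≤ ‖b₁‖ ^ 2 / 2) :
    ∀ m n : ℤ, ¬(m = 0 ∧ n = 0) → ‖b₁‖ ≤ ‖m • b₁ + n • b₂‖ := by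
  intro m n hmn
  have hb₁ : b₁ ≠ 0 := by
    have := hind.ne_zero 0
    simpa using this
  have ha : 0 < ‖b₁‖ := norm_pos_iff.mpr hb₁
  have hint : (1:ℤ) ≤ m^2 - |m*n| + n^2 := by
    rcases eq_or_ne m 0 with hm|hm
    · subst hm
      have hn : n ≠ 0 := by tauto
      have h2 := Int.one_le_abs hn
      simp only [zero_mul, abs_zero, zero_pow, ne_eq, OfNat.ofNat_ne_zero,
        not_false_eq_true, sub_zero, zero_add, zero_sub, neg_zero]
      nlinarith [sq_abs n]
    rcases eq_or_ne n 0 with hn|hn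
    · subst hn
      have h1 := Int.one_le_abs hm
      simp only [mul_zero, abs_zero, sub_zero]
      nlinarith [sq_abs m]
    · have h1 := Int.one_le_abs hm
      have h2 := Int.one_le_abs hn
      nlinarith [abs_mul m n, sq_abs m, sq_abs n, sq_nonneg (|m|-|n|)]
  have hintR : (1:ℝ) ≤ (m:ℝ)^2 - |(m:ℝ)*(n:ℝ)| + (n:ℝ)^2 := by exact_mod_cast hint
  have hsm : (m • b₁ : EuclideanSpace ℝ (Fin 2)) = (m:ℝ) • b₁ :=
    (Int.cast_smul_eq_zsmul ℝ m b₁).symm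
  have hsn : (n • b₂ : EuclideanSpace ℝ (Fin 2)) = (n:ℝ) • b₂ :=
    (Int.cast_smul_eq_zsmul ℝ n b₂).symm
  have hexp : ‖m • b₁ + n • b₂‖^2
      = (m:ℝ)^2*‖b₁‖^2 + 2*((m:ℝ)*(n:ℝ))*⟪b₁,b₂⟫ + (n:ℝ)^2*‖b₂‖^2 := by
    rw [hsm, hsn, norm_add_sq_real, norm_smul, norm_smul, real_inner_smul_left,
      real_inner_smul_right]
    simp only [Real.norm_eq_abs, mul_pow, sq_abs]
    ring
  have hle2 : ‖b₁‖^2 ≤ ‖b₂‖^2 := by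
    have := pow_le_pow_left₀ (norm_nonneg b₁) hle 2
    simpa using this
  have habs := abs_le.mp hred
  have key : ‖b₁‖^2 ≤ ‖m • b₁ + n • b₂‖^2 := by
    rw [hexp]
    have hn2 : ((n:ℝ)^2) * ‖b₁‖^2 ≤ ((n:ℝ)^2) * ‖b₂‖^2 :=
      mul_le_mul_of_nonneg_left hle2 (sq_nonneg _)
    rcases le_or_gt 0 ((m:ℝ)*(n:ℝ)) with h|h
    · have habs' : |(m:ℝ)*(n:ℝ)| = (m:ℝ)*(n:ℝ) := abs_of_nonneg h
      nlinarith [mul_le_mul_of_nonneg_left habs.1 h]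
    · have habs' : |(m:ℝ)*(n:ℝ)| = -((m:ℝ)*(n:ℝ)) := abs_of_neg h
      nlinarith [mul_le_mul_of_nonpos_left habs.2 h.le]
  nlinarith [norm_nonneg (m • b₁ + n • b₂), key, ha]
end

section
/- Let 0 < ε < 1/2 and let m(n) = ⌈log(n)/(2(1/2−ε)²)⌉. A system of ⌊n/m(n)⌋ independent binary clusters, each storing one bit and each failing (flipping its stored bit) with probability at most exp(−2 m(n) (1/2−ε)²), stores k(n) = ⌊n/m(n)⌋ bits with overall failure probability at most 1 − (1 − 1/n)^{k(n)}, which tends to 0; moreover k(n)/n ~ 2(1/2−ε)²/log(n), so the information rate is Θ(1/log n). -/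
open Filter

private lemma aux_div_tendsto (c : ℝ) (hc : 0 < c) :
    Tendsto (fun t : ℝ => t / (t / c + 1)) atTop (nhds c) := by
  have h1 : Tendsto (fun t : ℝ => t / c + 1) atTop atTop :=
    (tendsto_id.atTop_div_const hc).atTop_add tendsto_const_nhds
  have h2 : Tendsto (fun t : ℝ => (t / c + 1)⁻¹) atTop (nhds 0) :=
    tendsto_inv_atTop_zero.comp h1
  have h3 : Tendsto (fun t : ℝ => c * (1 - (t / c + 1)⁻¹)) atTop (nhds (c * (1 - 0))) :=
    (tendsto_const_nhds.sub h2).const_mul c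
  rw [sub_zero, mul_one] at h3
  refine h3.congr' ?_
  filter_upwards [eventually_ge_atTop (0 : ℝ)] with t ht
  have hd : t / c + 1 ≠ 0 := by positivity
  field_simp
  ring

/-- Quantitative content of Theorem 1: with cluster size `m(n) = ⌈log n/(2(1/2-ε)²)⌉`,
a system of `k(n) = ⌊n/m(n)⌋` independent clusters each failing with probability at
most `exp(-2 m(n) (1/2-ε)²)` has overall failure probability at most
`1 - (1-1/n)^{k(n)}`, which tends to `0`; moreover `k(n)/n ~ 2(1/2-ε)²/log n`,
so the information rate is `Θ(1/log n)`. -/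
theorem hopfield_info_rate (ε : ℝ) (hε0 : 0 < ε) (hε : ε < 1/2)
    (m : ℕ → ℕ) (hm : ∀ n : ℕ, m n = ⌈Real.log n / (2 * (1/2 - ε)^2)⌉₊)
    (k : ℕ → ℕ) (hk : ∀ n, k n = n / m n) :
    (∀ n : ℕ, 2 ≤ n → ∀ p : Fin (k n) → ℝ, (∀ i, 0 ≤ p i) →
      (∀ i, p i ≤ Real.exp (-2 * (m n : ℝ) * (1/2 - ε)^2)) →
      1 - ∏ i, (1 - p i) ≤ 1 - (1 - 1 / (n : ℝ)) ^ (k n)) ∧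
    Tendsto (fun n : ℕ => 1 - (1 - 1 / (n : ℝ)) ^ (k n)) atTop (nhds 0) ∧
    Tendsto (fun n : ℕ => (k n : ℝ) / n * Real.log n) atTop (nhds (2 * (1/2 - ε)^2)) := by
  set c : ℝ := 2 * (1/2 - ε)^2 with hc
  have hcpos : 0 < c := by
    have : 0 < 1/2 - ε := by linarith
    positivity
  -- basic facts for n ≥ 2
  have hlogpos : ∀ n : ℕ, 2 ≤ n → 0 < Real.log n := by
    intro n hn
    exact Real.log_pos (by exact_mod_cast hn.trans_lt' one_lt_two)
  have hm_ge : ∀ n : ℕ, Real.log n / c ≤ m n := by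
    intro n; rw [hm n]; exact Nat.le_ceil _
  have hm_lt : ∀ n : ℕ, 2 ≤ n → (m n : ℝ) < Real.log n / c + 1 := by
    intro n hn; rw [hm n]
    exact Nat.ceil_lt_add_one (le_of_lt (div_pos (hlogpos n hn) hcpos))
  have hm_pos : ∀ n : ℕ, 2 ≤ n → 0 < m n := by
    intro n hn
    have := hm_ge n
    by_contra h
    push_neg at h
    interval_cases (m n)
    simp only [Nat.cast_zero] at this
    exact absurd this (not_le.mpr (div_pos (hlogpos n hn) hcpos))
  -- m n → ∞ (as reals)
  have hm_tendsto : Tendsto (fun n : ℕ => (m n : ℝ)) atTop atTop := by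
    apply tendsto_atTop_mono hm_ge
    exact (Real.tendsto_log_atTop.comp tendsto_natCast_atTop_atTop).atTop_div_const hcpos
  -- k n / n → 0
  have hkn_le : ∀ n : ℕ, 2 ≤ n → (k n : ℝ) / n ≤ (m n : ℝ)⁻¹ := by
    intro n hn
    have hn0 : (0 : ℝ) < n := by positivity
    have hmpos : (0 : ℝ) < m n := by exact_mod_cast hm_pos n hn
    have h1 : (k n : ℝ) ≤ (n : ℝ) / m n := by rw [hk n]; exact Nat.cast_div_le
    calc (k n : ℝ) / n ≤ ((n : ℝ) / m n) / n := div_le_div_of_nonneg_right h1 hn0.le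
      _ = (m n : ℝ)⁻¹ := by field_simp [hn0.ne']
  have hkdiv : Tendsto (fun n : ℕ => (k n : ℝ) / n) atTop (nhds 0) := by
    apply tendsto_of_tendsto_of_tendsto_of_le_of_le' tendsto_const_nhds
      (tendsto_inv_atTop_zero.comp hm_tendsto)
    · filter_upwards [eventually_ge_atTop 2] with n hn
      positivity
    · filter_upwards [eventually_ge_atTop 2] with n hn
      exact hkn_le n hn
  refine ⟨?_, ?_, ?_⟩
  · -- part 1
    intro n hn p hp0 hpU
    have hn0 : (0 : ℝ) < n := by positivity
    have hexp : Real.exp (-2 * (m n : ℝ) * (1/2 - ε)^2) ≤ 1 / n := by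
      have h1 : Real.log n ≤ (m n : ℝ) * c := by
        have := hm_ge n
        rw [div_le_iff₀ hcpos] at this
        linarith
      have : Real.exp (-2 * (m n : ℝ) * (1/2 - ε)^2) = Real.exp (-((m n : ℝ) * c)) := by
        congr 1; rw [hc]; ring
      rw [this, one_div, ← Real.exp_log (show (0:ℝ) < (n:ℝ)⁻¹ by positivity),
        Real.log_inv, Real.exp_le_exp]
      linarith
    have hple : ∀ i, p i ≤ 1 / n := fun i => (hpU i).trans hexp
    have h1n : 1 / (n : ℝ) ≤ 1 := by
      rw [div_le_one hn0]; exact_mod_cast hn.trans_lt' one_lt_two |>.le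
    have h0n : (0 : ℝ) ≤ 1 / n := by positivity
    have : (1 - 1 / (n : ℝ)) ^ (k n) ≤ ∏ i, (1 - p i) := by
      calc (1 - 1 / (n : ℝ)) ^ (k n)
          = ∏ _i : Fin (k n), (1 - 1 / (n : ℝ)) := by
            rw [Finset.prod_const, Finset.card_univ, Fintype.card_fin]
        _ ≤ ∏ i, (1 - p i) :=
            Finset.prod_le_prod (fun i _ => by linarith) (fun i _ => by linarith [hple i])
    linarith
  · -- part 2
    apply tendsto_of_tendsto_of_tendsto_of_le_of_le' tendsto_const_nhds hkdiv
    · filter_upwards [eventually_ge_atTop 2] with n hn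
      have hn0 : (0 : ℝ) < n := by positivity
      have h1n : 1 / (n : ℝ) ≤ 1 := by
        rw [div_le_one hn0]; exact_mod_cast hn.trans_lt' one_lt_two |>.le
      have h0n : (0 : ℝ) ≤ 1 / n := by positivity
      have : (1 - 1 / (n : ℝ)) ^ (k n) ≤ 1 := pow_le_one₀ (by linarith) (by linarith)
      linarith
    · filter_upwards [eventually_ge_atTop 2] with n hn
      have hn0 : (0 : ℝ) < n := by positivity
      have := one_add_mul_le_pow (a := -(1 / (n : ℝ)))
        (by rw [neg_le, neg_neg]; linarith [div_le_one_of_le₀ (show (1:ℝ) ≤ n by exact_mod_cast hn.trans_lt' one_lt_two |>.le) hn0.le]) (k n)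
      rw [← sub_eq_add_neg, mul_neg, ← sub_eq_add_neg, mul_one_div] at this
      linarith
  · -- part 3
    refine tendsto_of_tendsto_of_tendsto_of_le_of_le'
      (g := fun n : ℕ => Real.log n / (Real.log n / c + 1) - Real.log n / n)
      (h := fun _ : ℕ => c) ?_ tendsto_const_nhds ?_ ?_
    · have h1 : Tendsto (fun n : ℕ => Real.log n / (Real.log n / c + 1)) atTop (nhds c) :=
        (aux_div_tendsto c hcpos).comp (Real.tendsto_log_atTop.comp tendsto_natCast_atTop_atTop)
      have h2 : Tendsto (fun n : ℕ => Real.log n / n) atTop (nhds 0) := by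
        have := Real.isLittleO_log_id_atTop.tendsto_div_nhds_zero
        exact this.comp tendsto_natCast_atTop_atTop
      simpa using h1.sub h2
    · -- lower bound
      filter_upwards [eventually_ge_atTop 2] with n hn
      have hn0 : (0 : ℝ) < n := by positivity
      have hmpos : (0 : ℝ) < m n := by exact_mod_cast hm_pos n hn
      have hlog := hlogpos n hn
      -- k n > n/m - 1
      have hkgt : (n : ℝ) / m n - 1 < k n := by
        rw [hk n]
        have h := Nat.lt_div_mul_add (hm_pos n hn) (a := n)
        have : (n : ℝ) < (n / m n : ℕ) * m n + m n := by exact_mod_cast h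
        rw [div_sub_one hmpos.ne', div_lt_iff₀ hmpos]
        push_cast
        linarith
      have step1 : Real.log n / m n - Real.log n / n ≤ (k n : ℝ) / n * Real.log n := by
        have : ((n : ℝ) / m n - 1) / n * Real.log n ≤ (k n : ℝ) / n * Real.log n := by
          apply mul_le_mul_of_nonneg_right _ hlog.le
          apply div_le_div_of_nonneg_right hkgt.le hn0.le |>.trans_eq rfl
        calc Real.log n / m n - Real.log n / n
            = ((n : ℝ) / m n - 1) / n * Real.log n := by field_simp
          _ ≤ _ := this
      have step2 : Real.log n / (Real.log n / c + 1) ≤ Real.log n / m n := by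
        apply div_le_div_of_nonneg_left hlog.le hmpos
        exact (hm_lt n hn).le
      linarith
    · -- upper bound
      filter_upwards [eventually_ge_atTop 2] with n hn
      have hn0 : (0 : ℝ) < n := by positivity
      have hmpos : (0 : ℝ) < m n := by exact_mod_cast hm_pos n hn
      have hlog := hlogpos n hn
      have hkle : (k n : ℝ) ≤ (n : ℝ) / m n := by rw [hk n]; exact Nat.cast_div_le
      have : (k n : ℝ) / n * Real.log n ≤ ((n : ℝ) / m n) / n * Real.log n := by
        apply mul_le_mul_of_nonneg_right _ hlog.le
        exact div_le_div_of_nonneg_right hkle hn0.le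
      have h2 : ((n : ℝ) / m n) / n * Real.log n = Real.log n / m n := by
        field_simp
      have h3 : Real.log n / m n ≤ c := by
        rw [div_le_iff₀ hmpos]
        have := hm_ge n
        rw [div_le_iff₀ hcpos] at this
        linarith
      linarith
end
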